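/- Let Q be nilpotent on a finite-dimensional space graded by fermion number F (with Q raising F by 1), and H = QQ† + Q†Q. Then tr((-1)^F e^{-βH}) is independent of β and equals the Euler characteristic Σ_n (-1)^n dim(ker Q / im Q)_n. -/

import Mathlib

open LinearMap Module Submodule

set_option maxHeartbeats 1000000 in
set_option synthInstance.maxHeartbeats 200000 in
theorem witten_index_eq_euler_characteristic
    {E : Type*} [NormedAddCommGroup E] [InnerProductSpace ℂ E] [FiniteDimensional ℂ E]
    (V : ℕ → Submodule ℂ E) (hV : DirectSum.IsInternal V)
    (N : ℕ) (hVN : ∀ n, N ≤ n → V n = ⊥)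
    (Q : E →L[ℂ] E) (hQ : Q ∘L Q = 0)
    (hgrade : ∀ n, ∀ x ∈ V n, Q x ∈ V (n + 1))
    (S : E →L[ℂ] E) (hS : ∀ n, ∀ x ∈ V n, S x = ((-1 : ℂ) ^ n) • x)
    (H : E →L[ℂ] E)
    (hH : H = Q ∘L ContinuousLinearMap.adjoint Q + ContinuousLinearMap.adjoint Q ∘L Q) :
    ∀ β : ℝ,
      LinearMap.trace ℂ E ((S ∘L NormedSpace.exp ((-β : ℂ) • H)) : E →ₗ[ℂ] E) =
      ((∑ n ∈ Finset.range N, (-1 : ℤ) ^ n *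
          (Module.finrank ℂ
            (↥(LinearMap.ker (Q : E →ₗ[ℂ] E) ⊓ V n) ⧸
              Submodule.comap (LinearMap.ker (Q : E →ₗ[ℂ] E) ⊓ V n).subtype
                (LinearMap.range (Q : E →ₗ[ℂ] E) ⊓ V n)) : ℤ) : ℤ) : ℂ) := by
  classical
  intro β
  letI : DirectSum.Decomposition V := hV.chooseDecomposition
  set q : Module.End ℂ E := (Q : E →ₗ[ℂ] E) with hqdef
  set s : Module.End ℂ E := (S : E →ₗ[ℂ] E) with hsdef
  set a : Module.End ℂ E := ((ContinuousLinearMap.adjoint Q : E →L[ℂ] E) : E →ₗ[ℂ] E) with hadef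
  set h : Module.End ℂ E := q * a + a * q with hhdef
  have hq2 : q * q = 0 := by
    ext x
    have := DFunLike.congr_fun hQ x
    simpa [q] using this
  have hh : (H : E →ₗ[ℂ] E) = h := by
    ext x
    simp [h, q, a, hH, mul_apply]
  -- commute
  have hc : Commute q h := by
    show q * h = h * q
    rw [hhdef, mul_add, add_mul, ← mul_assoc q q a, hq2, zero_mul, mul_assoc a q q, hq2,
      mul_zero, add_zero, zero_add, mul_assoc]
  -- anticommute
  have hsq : s * q = -(q * s) := by
    refine DirectSum.decompose_lhom_ext (R := ℂ) V fun i => ?_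
    ext ⟨x, hx⟩
    have h1 : S (Q x) = ((-1 : ℂ) ^ (i + 1)) • Q x := hS (i + 1) _ (hgrade i x hx)
    have h2 : S x = ((-1 : ℂ) ^ i) • x := hS i x hx
    simp only [LinearMap.comp_apply, Submodule.coe_subtype, mul_apply, LinearMap.neg_apply]
    show S (Q x) = -(Q (S x))
    rw [h1, h2, map_smul, pow_succ, mul_smul]
    simp
  -- trace of s * h^(j+1) = 0
  have hkey : ∀ j : ℕ, LinearMap.trace ℂ E (s * h ^ (j + 1)) = 0 := by
    intro j
    have hpow : h ^ j * q = q * h ^ j := ((hc.pow_right j)).symm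
    have gen : ∀ p : Module.End ℂ E, p * q = q * p →
        s * (p * h) = -(q * (s * (p * a))) + s * (p * (a * q)) := by
      intro p hp
      rw [hhdef, mul_add, mul_add,
        show p * (q * a) = (p * q) * a by rw [mul_assoc], hp,
        show s * (q * p * a) = (s * q) * (p * a) by rw [mul_assoc, mul_assoc], hsq]
      rw [neg_mul, mul_assoc]
    have e1 : s * h ^ (j + 1) = -(q * (s * (h ^ j * a))) + s * (h ^ j * (a * q)) := by
      rw [pow_succ]; exact gen (h ^ j) hpow
    rw [e1, map_add, map_neg, LinearMap.trace_mul_comm ℂ q (s * (h ^ j * a))]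
    rw [show s * (h ^ j * a) * q = s * (h ^ j * (a * q)) by rw [mul_assoc, mul_assoc]]
    rw [neg_add_cancel]
  -- reduce trace of exp to trace s
  have hclm_pow : ∀ (f : E →L[ℂ] E) (k : ℕ),
      ((f ^ k : E →L[ℂ] E) : E →ₗ[ℂ] E) = ((f : E →ₗ[ℂ] E)) ^ k := by
    intro f k
    induction k with
    | zero => rfl
    | succ n ih => rw [pow_succ, pow_succ, ← ih]; rfl
  have hA : ∀ k : ℕ, ((((-β : ℂ) • H) ^ k : E →L[ℂ] E) : E →ₗ[ℂ] E) = ((-β : ℂ) ^ k) • h ^ k := by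
    intro k
    rw [hclm_pow, ContinuousLinearMap.coe_smul, smul_pow, hh]
  have hexp : LinearMap.trace ℂ E ((S ∘L NormedSpace.exp ((-β : ℂ) • H)) : E →ₗ[ℂ] E)
      = LinearMap.trace ℂ E s := by
    set φ : (E →L[ℂ] E) →L[ℂ] ℂ :=
      LinearMap.toContinuousLinearMap
        ((LinearMap.trace ℂ E) ∘ₗ (LinearMap.mulLeft ℂ s) ∘ₗ (ContinuousLinearMap.coeLM ℂ)) with hφ
    have hφ_apply : ∀ T : E →L[ℂ] E,
        φ T = LinearMap.trace ℂ E (s * (T : E →ₗ[ℂ] E)) := fun T => rfl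
    have h1 : LinearMap.trace ℂ E ((S ∘L NormedSpace.exp ((-β : ℂ) • H)) : E →ₗ[ℂ] E)
        = φ (NormedSpace.exp ((-β : ℂ) • H)) := by
      rw [hφ_apply]; rfl
    rw [h1, NormedSpace.exp_eq_tsum ℂ]
    have hsum : Summable fun k : ℕ => ((Nat.factorial k : ℂ)⁻¹) • ((-β : ℂ) • H) ^ k :=
      NormedSpace.expSeries_summable' (𝕂 := ℂ) ((-β : ℂ) • H)
    rw [φ.map_tsum hsum]
    have hterm : ∀ k : ℕ, k ≠ 0 → φ (((Nat.factorial k : ℂ)⁻¹) • ((-β : ℂ) • H) ^ k) = 0 := by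
      intro k hk
      obtain ⟨j, rfl⟩ := Nat.exists_eq_succ_of_ne_zero hk
      rw [map_smul, hφ_apply, hA, smul_eq_mul,
        show s * (((-β : ℂ) ^ (j + 1)) • h ^ (j + 1)) = ((-β : ℂ) ^ (j + 1)) • (s * h ^ (j + 1))
          from (mul_smul_comm _ _ _), map_smul, hkey j]
      simp
    rw [tsum_eq_single 0 hterm, map_smul, hφ_apply, hA]
    simp
  rw [hexp]
  -- structural facts about the grading
  have hrange_le : LinearMap.range q ≤ LinearMap.ker q := by
    rintro x ⟨y, rfl⟩
    exact DFunLike.congr_fun hq2 y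
  have hdec : ∀ y : E, ((DirectSum.decompose V (q y) 0 : E) = 0) ∧
      ∀ n : ℕ, (DirectSum.decompose V (q y) (n + 1) : E)
        = q ((DirectSum.decompose V y n : E)) := by
    refine DirectSum.Decomposition.inductionOn V ?_ ?_ ?_
    · simp
    · rintro i ⟨x, hx⟩
      have hqx : q x ∈ V (i + 1) := hgrade i x hx
      constructor
      · exact DirectSum.decompose_of_mem_ne V hqx (Nat.succ_ne_zero i)
      · intro n
        rcases eq_or_ne i n with rfl | hne
        · rw [DirectSum.decompose_of_mem_same V hqx, DirectSum.decompose_of_mem_same V hx]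
        · rw [DirectSum.decompose_of_mem_ne V hqx (by omega),
            DirectSum.decompose_of_mem_ne V hx hne, map_zero]
    · intro x y hx hy
      constructor
      · rw [map_add, DirectSum.decompose_add, DirectSum.add_apply, Submodule.coe_add, hx.1, hy.1,
          add_zero]
      · intro n
        rw [map_add, DirectSum.decompose_add, DirectSum.add_apply, Submodule.coe_add, hx.2 n,
          hy.2 n, DirectSum.decompose_add, DirectSum.add_apply, Submodule.coe_add, map_add]
  have hmapQ : ∀ n, Submodule.map q (V n) = LinearMap.range q ⊓ V (n + 1) := by
    intro n
    apply le_antisymm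
    · rintro x ⟨y, hy, rfl⟩
      exact ⟨⟨y, rfl⟩, hgrade n y hy⟩
    · rintro x ⟨⟨y, rfl⟩, hx⟩
      have h2 := (hdec y).2 n
      rw [DirectSum.decompose_of_mem_same V hx] at h2
      exact ⟨_, (DirectSum.decompose V y n).2, h2.symm⟩
  have hB0 : LinearMap.range q ⊓ V 0 = ⊥ := by
    rw [eq_bot_iff]
    rintro x ⟨⟨y, rfl⟩, hx⟩
    have h1 := (hdec y).1
    rw [DirectSum.decompose_of_mem_same V hx] at h1
    simp [h1]
  -- trace of s
  have hfin : {i | V i ≠ ⊥}.Finite := by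
    refine Set.Finite.subset (Set.finite_Iio N) fun i hi => ?_
    simp only [Set.mem_Iio]
    by_contra hlt
    push_neg at hlt
    exact hi (hVN i hlt)
  have hmaps : ∀ n, Set.MapsTo s (V n) (V n) := by
    intro n x hx
    show s x ∈ V n
    rw [show s x = ((-1 : ℂ) ^ n) • x from hS n x hx]
    exact (V n).smul_mem _ hx
  have htr2 : LinearMap.trace ℂ E s
      = ∑ n ∈ Finset.range N, ((-1 : ℂ) ^ n) * (finrank ℂ (V n) : ℂ) := by
    rw [LinearMap.trace_eq_sum_trace_restrict' hV hfin hmaps]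
    have hterm : ∀ i, LinearMap.trace ℂ (V i) (s.restrict (hmaps i))
        = ((-1 : ℂ) ^ i) * (finrank ℂ (V i) : ℂ) := by
      intro i
      have : s.restrict (hmaps i) = ((-1 : ℂ) ^ i) • LinearMap.id := by
        ext ⟨x, hx⟩
        simp only [LinearMap.restrict_coe_apply, LinearMap.smul_apply, LinearMap.id_coe, id_eq,
          SetLike.val_smul]
        exact hS i x hx
      rw [this, map_smul, LinearMap.trace_id, smul_eq_mul]
    calc ∑ i ∈ hfin.toFinset, LinearMap.trace ℂ (V i) (s.restrict (hmaps i))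
        = ∑ i ∈ hfin.toFinset, ((-1 : ℂ) ^ i) * (finrank ℂ (V i) : ℂ) :=
          Finset.sum_congr rfl fun i _ => hterm i
      _ = ∑ n ∈ Finset.range N, ((-1 : ℂ) ^ n) * (finrank ℂ (V n) : ℂ) := by
          refine Finset.sum_subset (fun i hi => ?_) (fun i hi hni => ?_)
          · simp only [Set.Finite.mem_toFinset, Set.mem_setOf_eq] at hi
            simp only [Finset.mem_range]
            by_contra hlt
            push_neg at hlt
            exact hi (hVN i hlt)
          · simp only [Set.Finite.mem_toFinset, Set.mem_setOf_eq, not_not] at hni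
            rw [hni]
            simp
  rw [htr2]
  -- rank-nullity on each graded piece
  have hvzb : ∀ n, finrank ℂ (V n)
      = finrank ℂ (LinearMap.ker q ⊓ V n : Submodule ℂ E)
        + finrank ℂ (LinearMap.range q ⊓ V (n + 1) : Submodule ℂ E) := by
    intro n
    have hrn := LinearMap.finrank_range_add_finrank_ker (q.domRestrict (V n))
    rw [LinearMap.range_domRestrict, hmapQ n] at hrn
    have hker : LinearMap.ker (q.domRestrict (V n))
        = Submodule.comap (V n).subtype (LinearMap.ker q ⊓ V n) := by
      rw [LinearMap.ker_domRestrict, Submodule.comap_inf, Submodule.comap_subtype_self,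
        inf_top_eq]
    have hek : finrank ℂ (LinearMap.ker (q.domRestrict (V n)))
        = finrank ℂ (LinearMap.ker q ⊓ V n : Submodule ℂ E) := by
      rw [hker]
      exact (Submodule.comapSubtypeEquivOfLe inf_le_right).finrank_eq
    rw [hek] at hrn
    omega
  have hrzb : ∀ n,
      finrank ℂ (↥(LinearMap.ker q ⊓ V n) ⧸
        Submodule.comap (LinearMap.ker q ⊓ V n).subtype (LinearMap.range q ⊓ V n))
        + finrank ℂ (LinearMap.range q ⊓ V n : Submodule ℂ E)
      = finrank ℂ (LinearMap.ker q ⊓ V n : Submodule ℂ E) := by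
    intro n
    have hle : LinearMap.range q ⊓ V n ≤ LinearMap.ker q ⊓ V n :=
      inf_le_inf_right _ hrange_le
    have hq' := Submodule.finrank_quotient_add_finrank
      (Submodule.comap (LinearMap.ker q ⊓ V n).subtype (LinearMap.range q ⊓ V n))
    rwa [(Submodule.comapSubtypeEquivOfLe hle).finrank_eq] at hq'
  have hb0 : finrank ℂ (LinearMap.range q ⊓ V 0 : Submodule ℂ E) = 0 := by
    rw [hB0]
    exact finrank_bot ℂ E
  have hbN : finrank ℂ (LinearMap.range q ⊓ V N : Submodule ℂ E) = 0 := by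
    rw [hVN N le_rfl, inf_bot_eq]
    exact finrank_bot ℂ E
  set g : ℕ → ℤ :=
    fun n => (-1 : ℤ) ^ n * (finrank ℂ (LinearMap.range q ⊓ V n : Submodule ℂ E) : ℤ) with hg
  have tele : ∑ n ∈ Finset.range N, (g n - g (n + 1)) = g 0 - g N :=
    Finset.sum_range_sub' g N
  have hsum_eq : ∑ n ∈ Finset.range N, (-1 : ℤ) ^ n * (finrank ℂ (V n) : ℤ)
      = ∑ n ∈ Finset.range N, (-1 : ℤ) ^ n *
          (finrank ℂ (↥(LinearMap.ker q ⊓ V n) ⧸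
            Submodule.comap (LinearMap.ker q ⊓ V n).subtype
              (LinearMap.range q ⊓ V n)) : ℤ) := by
    have step : ∀ n, (-1 : ℤ) ^ n * (finrank ℂ (V n) : ℤ)
        = (-1 : ℤ) ^ n *
            (finrank ℂ (↥(LinearMap.ker q ⊓ V n) ⧸
              Submodule.comap (LinearMap.ker q ⊓ V n).subtype
                (LinearMap.range q ⊓ V n)) : ℤ) + (g n - g (n + 1)) := by
      intro n
      have e1 : (finrank ℂ (V n) : ℤ)
          = (finrank ℂ (LinearMap.ker q ⊓ V n : Submodule ℂ E) : ℤ)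
            + (finrank ℂ (LinearMap.range q ⊓ V (n + 1) : Submodule ℂ E) : ℤ) := by
        exact_mod_cast hvzb n
      have e2 : (finrank ℂ (↥(LinearMap.ker q ⊓ V n) ⧸
            Submodule.comap (LinearMap.ker q ⊓ V n).subtype
              (LinearMap.range q ⊓ V n)) : ℤ)
            + (finrank ℂ (LinearMap.range q ⊓ V n : Submodule ℂ E) : ℤ)
          = (finrank ℂ (LinearMap.ker q ⊓ V n : Submodule ℂ E) : ℤ) := by
        exact_mod_cast hrzb n
      simp only [hg]
      linear_combination ((-1 : ℤ) ^ n) * e1 - ((-1 : ℤ) ^ n) * e2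
    rw [Finset.sum_congr rfl fun n _ => step n, Finset.sum_add_distrib, tele]
    simp [hg, hb0, hbN]
  rw [← hsum_eq]
  push_cast
  rfl
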